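/- For f(x,y) = (y − x², x − y²), the formal inverse branches are given by w_{m,n}(x₀,y₀) = (x₀ + (−1)^m √(x₀² − y₀), y₀ + (−1)^n √(y₀² − x₀)) for m,n ∈ {0,1}: whenever x₀² ≥ y₀ and y₀² ≥ x₀ and 4xy ≠ 1 at the resulting point (x,y) = w_{m,n}(x₀,y₀), we have N_f(x,y) = (x₀,y₀). -/

import Mathlib

open ContinuousLinearMap



/-- Newton map on the plane. -/
noncomputable def newton2 (f : ℝ × ℝ → ℝ × ℝ) (x : ℝ × ℝ) : ℝ × ℝ :=
  x - (fderiv ℝ f x).inverse (f x)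

noncomputable def Lmap (x y : ℝ) : (ℝ × ℝ) →L[ℝ] (ℝ × ℝ) :=
  ((snd ℝ ℝ ℝ) - (2*x) • (fst ℝ ℝ ℝ)).prod ((fst ℝ ℝ ℝ) - (2*y) • (snd ℝ ℝ ℝ))

noncomputable def Lmap' (x y : ℝ) : (ℝ × ℝ) →L[ℝ] (ℝ × ℝ) :=
  (((-2*y)/(4*x*y-1)) • (fst ℝ ℝ ℝ) + ((-1)/(4*x*y-1)) • (snd ℝ ℝ ℝ)).prod
    (((-1)/(4*x*y-1)) • (fst ℝ ℝ ℝ) + ((-2*x)/(4*x*y-1)) • (snd ℝ ℝ ℝ))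

noncomputable def Lequiv (x y : ℝ) (hd : 4*x*y ≠ 1) : (ℝ × ℝ) ≃L[ℝ] (ℝ × ℝ) :=
  ContinuousLinearEquiv.equivOfInverse (Lmap x y) (Lmap' x y)
    (by
      intro p
      have h : 4*x*y - 1 ≠ 0 := sub_ne_zero.mpr hd
      have h' : y*4*x - 1 ≠ 0 := by contrapose! h; linarith
      simp only [Lmap, Lmap', prod_apply, coe_sub', coe_smul', add_apply, smul_apply,
        Pi.sub_apply, Pi.smul_apply, coe_fst', coe_snd', smul_eq_mul]
      ext <;> simp <;> field_simp <;> ring)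
    (by
      intro p
      have h : 4*x*y - 1 ≠ 0 := sub_ne_zero.mpr hd
      have h' : y*4*x - 1 ≠ 0 := by contrapose! h; linarith
      simp only [Lmap, Lmap', prod_apply, coe_sub', coe_smul', add_apply, smul_apply,
        Pi.sub_apply, Pi.smul_apply, coe_fst', coe_snd', smul_eq_mul]
      ext <;> simp <;> field_simp <;> ring)

lemma hasfd (f : ℝ × ℝ → ℝ × ℝ)
    (hf : ∀ z : ℝ × ℝ, f z = (z.2 - z.1 ^ 2, z.1 - z.2 ^ 2)) (x y : ℝ) :
    HasFDerivAt f (Lmap x y) (x, y) := by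
  have : f = fun z : ℝ × ℝ => (z.2 - z.1 ^ 2, z.1 - z.2 ^ 2) := funext hf
  rw [this]
  have hp1 : HasFDerivAt (fun z : ℝ × ℝ => z.1 * z.1) ((2*x) • (fst ℝ ℝ ℝ)) (x, y) := by
    have := (hasFDerivAt_fst (𝕜 := ℝ) (E := ℝ) (F := ℝ) (p := (x,y))).mul
      (hasFDerivAt_fst (𝕜 := ℝ) (E := ℝ) (F := ℝ) (p := (x,y)))
    refine this.congr_fderiv ?_
    ext p <;> simp <;> ring
  have hp2 : HasFDerivAt (fun z : ℝ × ℝ => z.2 * z.2) ((2*y) • (snd ℝ ℝ ℝ)) (x, y) := by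
    have := (hasFDerivAt_snd (𝕜 := ℝ) (E := ℝ) (F := ℝ) (p := (x,y))).mul
      (hasFDerivAt_snd (𝕜 := ℝ) (E := ℝ) (F := ℝ) (p := (x,y)))
    refine this.congr_fderiv ?_
    ext p <;> simp <;> ring
  have h1 : HasFDerivAt (fun z : ℝ × ℝ => z.2 - z.1 ^ 2)
      ((snd ℝ ℝ ℝ) - (2*x) • (fst ℝ ℝ ℝ)) (x, y) := by
    have heq : (fun z : ℝ × ℝ => z.2 - z.1 ^ 2) = fun z : ℝ × ℝ => z.2 - z.1 * z.1 := by
      funext z; ring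
    rw [heq]
    exact (hasFDerivAt_snd (𝕜 := ℝ) (E := ℝ) (F := ℝ) (p := (x,y))).sub hp1
  have h2 : HasFDerivAt (fun z : ℝ × ℝ => z.1 - z.2 ^ 2)
      ((fst ℝ ℝ ℝ) - (2*y) • (snd ℝ ℝ ℝ)) (x, y) := by
    have heq : (fun z : ℝ × ℝ => z.1 - z.2 ^ 2) = fun z : ℝ × ℝ => z.1 - z.2 * z.2 := by
      funext z; ring
    rw [heq]
    exact (hasFDerivAt_fst (𝕜 := ℝ) (E := ℝ) (F := ℝ) (p := (x,y))).sub hp2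
  exact h1.prodMk h2

/-- The four formal inverse branches `w_{m,n}` of the Newton map of
`f(x,y) = (y − x², x − y²)`: whenever the square roots are real and the resulting point is
in the domain of the Newton map, the Newton map sends it back to `(x₀, y₀)`. -/
theorem stmt_13 (f : ℝ × ℝ → ℝ × ℝ)
    (hf : ∀ z : ℝ × ℝ, f z = (z.2 - z.1 ^ 2, z.1 - z.2 ^ 2))
    (x₀ y₀ : ℝ) (m n : Fin 2)
    (h1 : x₀ ^ 2 ≥ y₀) (h2 : y₀ ^ 2 ≥ x₀)
    (x y : ℝ)
    (hx : x = x₀ + (-1 : ℝ) ^ (m : ℕ) * Real.sqrt (x₀ ^ 2 - y₀))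
    (hy : y = y₀ + (-1 : ℝ) ^ (n : ℕ) * Real.sqrt (y₀ ^ 2 - x₀))
    (hd : 4 * x * y ≠ 1) :
    newton2 f (x, y) = (x₀, y₀) := by
  have h : 4*x*y - 1 ≠ 0 := sub_ne_zero.mpr hd
  have h' : y*4*x - 1 ≠ 0 := by contrapose! h; linarith
  have h'' : x*y*4 - 1 ≠ 0 := by contrapose! h; linarith
  have hde : fderiv ℝ f (x, y) = ((Lequiv x y hd : (ℝ×ℝ) ≃L[ℝ] (ℝ×ℝ)) : (ℝ×ℝ) →L[ℝ] (ℝ×ℝ)) :=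
    (hasfd f hf x y).fderiv
  have hinv : (fderiv ℝ f (x, y)).inverse = Lmap' x y := by
    rw [hde, ContinuousLinearMap.inverse_equiv]
    rfl
  have hm : ((-1:ℝ)^(m:ℕ))^2 = 1 := by
    rw [← pow_mul, mul_comm, pow_mul, neg_one_sq, one_pow]
  have hn : ((-1:ℝ)^(n:ℕ))^2 = 1 := by
    rw [← pow_mul, mul_comm, pow_mul, neg_one_sq, one_pow]
  have hex : (x - x₀)^2 = x₀^2 - y₀ := by
    rw [hx, add_sub_cancel_left, mul_pow, hm, one_mul,
      Real.sq_sqrt (sub_nonneg.mpr h1)]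
  have hey : (y - y₀)^2 = y₀^2 - x₀ := by
    rw [hy, add_sub_cancel_left, mul_pow, hn, one_mul,
      Real.sq_sqrt (sub_nonneg.mpr h2)]
  have ex : y₀ = 2*x*x₀ - x^2 := by nlinarith [hex]
  have ey : x₀ = 2*y*y₀ - y^2 := by nlinarith [hey]
  have hx0 : x₀*(4*x*y-1) = 2*x^2*y + y^2 := by linear_combination -ey - 2*y*ex
  have hy0 : y₀*(4*x*y-1) = 2*y^2*x + x^2 := by linear_combination -ex - 2*x*ey
  rw [newton2, hinv, hf]
  simp only [Lmap', prod_apply, add_apply, smul_apply, coe_fst', coe_snd', smul_eq_mul,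
    coe_smul', Pi.smul_apply]
  apply Prod.ext <;> simp <;> field_simp
  · linear_combination -hx0
  · linear_combination -hy0
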